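/- If k ≡ 3 (mod 5), say k = 5m+3, then K_{4k+2,4k+2,4k+2} has no equitable (12m+8, 3)-tree-coloring; hence va₃≡(K_{4k+2,4k+2,4k+2}) ≥ (12k+9)/5. -/

import Mathlib

open SimpleGraph

/-- `G` has an equitable `(t,k)`-tree-coloring: a map `f : V → Fin t` whose color
classes have sizes differing by at most 1, and each color class induces a forest
(each component a tree) of maximum degree at most `k`. -/
def EqTreeColorable {V : Type} [Fintype V] (G : SimpleGraph V) (t k : ℕ) : Prop :=
  ∃ f : V → Fin t,
    (∀ i j : Fin t, ({v | f v = i} : Set V).ncard ≤ ({v | f v = j} : Set V).ncard + 1) ∧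
    (∀ i : Fin t, (G.induce {v | f v = i}).IsAcyclic) ∧
    (∀ i : Fin t, ∀ v, ((G.induce {v | f v = i}).neighborSet v).ncard ≤ k)

/-- The strong equitable vertex `k`-arboricity: the least `t` such that `G` has an
equitable `(t',k)`-tree-coloring for every `t' ≥ t`. -/
noncomputable def vaStrong {V : Type} [Fintype V] (G : SimpleGraph V) (k : ℕ) : ℕ :=
  sInf {t | ∀ t', t ≤ t' → EqTreeColorable G t' k}

/-- The complete tripartite graph `K_{n,n,n}`. -/
def K3 (n : ℕ) : SimpleGraph (Σ _ : Fin 3, Fin n) :=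
  completeMultipartiteGraph (fun _ => Fin n)

/- ### Auxiliary lemmas -/

lemma not_in_single_edge {V : Type} {G : SimpleGraph V} {a b x y : V}
    (hxa : x ≠ a ∨ y ≠ b) (hxb : x ≠ b ∨ y ≠ a) (hxy : G.Adj x y) :
    (G \ fromEdgeSet {s(a, b)}).Adj x y := by
  refine ⟨hxy, ?_⟩
  rw [fromEdgeSet_adj]
  rintro ⟨hmem, -⟩
  rw [Set.mem_singleton_iff, Sym2.eq_iff] at hmem
  rcases hmem with ⟨h1, h2⟩ | ⟨h1, h2⟩
  · rcases hxa with h | h <;> [exact h h1; exact h h2]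
  · rcases hxb with h | h <;> [exact h h1; exact h h2]

/-- An acyclic graph contains no 4-cycle. -/
lemma no_c4 {V : Type} (G : SimpleGraph V) (hG : G.IsAcyclic) {a b c d : V}
    (hac : a ≠ c) (hbd : b ≠ d) (hab : G.Adj a b) (hbc : G.Adj b c)
    (hcd : G.Adj c d) (hda : G.Adj d a) : False := by
  have hbr := (isAcyclic_iff_forall_adj_isBridge.mp hG) hab
  rw [isBridge_iff] at hbr
  apply hbr
  have h1 : (G \ fromEdgeSet {s(a, b)}).Adj a d :=
    not_in_single_edge (Or.inr hbd.symm) (Or.inl hab.ne) hda.symm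
  have h2 : (G \ fromEdgeSet {s(a, b)}).Adj d c :=
    not_in_single_edge (Or.inl hda.ne) (Or.inl (fun h => hbd h.symm)) hcd.symm
  have h3 : (G \ fromEdgeSet {s(a, b)}).Adj c b :=
    not_in_single_edge (Or.inl (fun h => hac h.symm)) (Or.inl hbc.ne') hbc.symm
  exact (h1.reachable.trans h2.reachable).trans h3.reachable

/-- In `K_{n,n,n}`, a color class of size at least `5` inducing an acyclic graph of
maximum degree at most `3` lies entirely inside one part. -/
lemma class_one_part {n : ℕ} (S : Set (Σ _ : Fin 3, Fin n))
    (h5 : 5 ≤ S.ncard)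
    (hac : ((K3 n).induce S).IsAcyclic)
    (hdeg : ∀ v, (((K3 n).induce S).neighborSet v).ncard ≤ 3) :
    ∃ p : Fin 3, ∀ v ∈ S, v.1 = p := by
  have hSfin : S.Finite := Set.toFinite S
  have key : ∀ x ∈ S, 2 ≤ {v ∈ S | v.1 = x.1}.ncard := by
    intro x hx
    have himg : Subtype.val '' (((K3 n).induce S).neighborSet ⟨x, hx⟩)
        = S \ {v ∈ S | v.1 = x.1} := by
      ext v
      constructor
      · rintro ⟨⟨z, hz⟩, hadj, rfl⟩
        have : x.1 ≠ z.1 := hadj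
        exact ⟨hz, fun h => this h.2.symm⟩
      · rintro ⟨hv, hv2⟩
        have hne : x.1 ≠ v.1 := fun h => hv2 ⟨hv, h.symm⟩
        exact ⟨⟨v, hv⟩, hne, rfl⟩
    have h3 : (S \ {v ∈ S | v.1 = x.1}).ncard ≤ 3 := by
      rw [← himg, Set.ncard_image_of_injective _ Subtype.val_injective]
      exact hdeg ⟨x, hx⟩
    have hsub : {v ∈ S | v.1 = x.1} ⊆ S := fun v hv => hv.1
    have := Set.ncard_diff_add_ncard_of_subset hsub hSfin
    omega
  obtain ⟨u, hu⟩ : S.Nonempty := by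
    rw [← Set.ncard_pos hSfin]; omega
  refine ⟨u.1, fun w hw => ?_⟩
  by_contra hwu
  have hA := key u hu
  have hB := key w hw
  obtain ⟨a2, ha2, ha2u⟩ := Set.exists_ne_of_one_lt_ncard hA u
  obtain ⟨b2, hb2, hb2w⟩ := Set.exists_ne_of_one_lt_ncard hB w
  have hadj : ∀ (x y : Σ _ : Fin 3, Fin n) (hx : x ∈ S) (hy : y ∈ S), x.1 ≠ y.1 →
      ((K3 n).induce S).Adj ⟨x, hx⟩ ⟨y, hy⟩ := fun x y hx hy h => h
  refine no_c4 _ hac (a := ⟨u, hu⟩) (b := ⟨w, hw⟩) (c := ⟨a2, ha2.1⟩) (d := ⟨b2, hb2.1⟩)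
    ?_ ?_ ?_ ?_ ?_ ?_
  · exact fun h => ha2u (congrArg Subtype.val h).symm
  · exact fun h => hb2w (congrArg Subtype.val h).symm
  · exact hadj _ _ _ _ (fun h => hwu h.symm)
  · exact hadj _ _ _ _ (by rw [ha2.2]; exact hwu)
  · exact hadj _ _ _ _ (by rw [ha2.2, hb2.2]; exact fun h => hwu h.symm)
  · exact hadj _ _ _ _ (by rw [hb2.2]; exact hwu)

lemma small_acyclic {V : Type} [Finite V] (G : SimpleGraph V) (h : Nat.card V ≤ 2) :
    G.IsAcyclic := by
  intro v c hc
  have := Fintype.ofFinite V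
  have h3 := hc.three_le_length
  have hnd := hc.support_nodup
  have hlen : c.support.tail.length = c.length := by
    simp [SimpleGraph.Walk.length_support]
  have := List.Nodup.length_le_card hnd
  rw [hlen] at this
  rw [Nat.card_eq_fintype_card] at h
  omega

lemma small_class_good {V : Type} [Finite V] (G : SimpleGraph V) (s : Set V)
    (h : s.ncard ≤ 2) :
    (G.induce s).IsAcyclic ∧ ∀ v, ((G.induce s).neighborSet v).ncard ≤ 3 := by
  have hcard : Nat.card ↥s ≤ 2 := by rwa [Nat.card_coe_set_eq]
  refine ⟨small_acyclic _ hcard, fun v => ?_⟩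
  have h1 : ((G.induce s).neighborSet v).ncard ≤ (Set.univ : Set ↥s).ncard :=
    Set.ncard_le_ncard (Set.subset_univ _) (Set.toFinite _)
  have h2 : (Set.univ : Set ↥s).ncard = Nat.card ↥s := Set.ncard_univ _
  omega

/-- Any graph admits an equitable `(t,3)`-tree-coloring when `t` is at least half the
number of vertices (all classes have size at most two). -/
lemma colorable_of_two_mul {V : Type} [Fintype V] (G : SimpleGraph V) (t : ℕ) (ht : 0 < t)
    (h : Fintype.card V ≤ 2 * t) : EqTreeColorable G t 3 := by
  classical
  set N := Fintype.card V with hN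
  let e := Fintype.equivFin V
  refine ⟨fun v => ⟨(e v).val % t, Nat.mod_lt _ ht⟩, ?_⟩
  set J : Fin t → Set (Fin N) := fun i => {j | j.val % t = i.val} with hJ
  have hclass : ∀ i, ({v | (⟨(e v).val % t, Nat.mod_lt _ ht⟩ : Fin t) = i} : Set V)
      = e ⁻¹' (J i) := by
    intro i; ext v; exact Fin.ext_iff
  have hncard : ∀ i, ({v | (⟨(e v).val % t, Nat.mod_lt _ ht⟩ : Fin t) = i} : Set V).ncard
      = (J i).ncard := by
    intro i
    rw [hclass i, ← Equiv.image_symm_eq_preimage,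
      Set.ncard_image_of_injective _ e.symm.injective]
  have hpair : ∀ (i : Fin t) (x : Fin N), x ∈ J i →
      ((x : ℕ) = i.val ∨ (x : ℕ) = i.val + t) := by
    intro i x hx
    have hd := Nat.div_add_mod x.val t
    have hlt : x.val < 2 * t := lt_of_lt_of_le x.isLt h
    have hq : x.val / t < 2 := by
      rw [Nat.div_lt_iff_lt_mul ht]; omega
    have hmod : x.val % t = i.val := hx
    interval_cases hqq : (x.val / t) <;> omega
  have hle2 : ∀ i, (J i).ncard ≤ 2 := by
    intro i
    have := Set.ncard_le_ncard_of_injOn (t := ({i.val, i.val + t} : Set ℕ)) Fin.val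
      (fun x hx => hpair i x hx) (Fin.val_injective.injOn) (Set.toFinite _)
    have h2 : ({i.val, i.val + t} : Set ℕ).ncard ≤ 2 := by
      refine le_trans (Set.ncard_insert_le _ _) ?_
      simp
    omega
  have hone : ∀ i j : Fin t, 2 ≤ (J i).ncard → 1 ≤ (J j).ncard := by
    intro i j h2
    have : 1 < (J i).ncard := h2
    rw [Set.one_lt_ncard (Set.toFinite _)] at this
    obtain ⟨a, ha, b, hb, hab⟩ := this
    have hmax : i.val + t < N := by
      rcases hpair i a ha with h1 | h1 <;> rcases hpair i b hb with h2' | h2'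
      · exact absurd (Fin.val_injective (h1.trans h2'.symm)) hab
      · omega
      · omega
      · exact absurd (Fin.val_injective (h1.trans h2'.symm)) hab
    have hjlt : (j : ℕ) < N := lt_of_lt_of_le j.isLt (by omega)
    have hmem : (⟨j.val, hjlt⟩ : Fin N) ∈ J j := by
      show (j : ℕ) % t = j.val
      exact Nat.mod_eq_of_lt j.isLt
    have := Set.ncard_pos (Set.toFinite (J j)) |>.mpr ⟨_, hmem⟩
    omega
  refine ⟨fun i j => ?_, fun i => ?_, fun i v => ?_⟩
  · rw [hncard, hncard]
    rcases le_or_gt (J i).ncard 1 with h1 | h1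
    · omega
    · have := hone i j h1
      have := hle2 i
      omega
  · exact (small_class_good G _ (by rw [hncard]; exact hle2 i)).1
  · exact (small_class_good G _ (by rw [hncard]; exact hle2 i)).2 v

lemma card_K3V (n : ℕ) : Fintype.card (Σ _ : Fin 3, Fin n) = 3 * n := by
  simp [Fintype.card_sigma]

/-- The main counting argument: no equitable `(12m+8, 3)`-tree-coloring
of `K_{4k+2,4k+2,4k+2}` exists when `k = 5m+3`. -/
lemma no_coloring (k m : ℕ) (hk : k = 5 * m + 3) :
    ¬ EqTreeColorable (K3 (4 * k + 2)) (12 * m + 8) 3 := by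
  classical
  rintro ⟨f, hEq, hAc, hDeg⟩
  set C : Fin (12 * m + 8) → Finset (Σ _ : Fin 3, Fin (4 * k + 2)) :=
    fun i => Finset.univ.filter (fun v => f v = i) with hCs
  have hC : ∀ i, ({v | f v = i} : Set (Σ _ : Fin 3, Fin (4 * k + 2))).ncard = (C i).card := by
    intro i
    rw [← Set.ncard_coe_finset]
    congr 1
    ext v
    simp [hCs]
  have hcardV : Fintype.card (Σ _ : Fin 3, Fin (4 * k + 2)) = 3 * (4 * k + 2) :=
    card_K3V _
  have hsum : ∑ i, (C i).card = 3 * (4 * k + 2) := by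
    rw [← hcardV, ← Finset.card_univ]
    exact (Finset.card_eq_sum_card_fiberwise (fun x _ => Finset.mem_univ (f x))).symm
  have h5 : ∀ i, 5 ≤ (C i).card := by
    by_contra hcon
    push_neg at hcon
    obtain ⟨j, hj⟩ := hcon
    have hall : ∀ i ∈ Finset.univ, (C i).card ≤ 5 := by
      intro i _
      have := hEq i j
      rw [hC, hC] at this
      omega
    have := Finset.sum_le_card_nsmul Finset.univ (fun i => (C i).card) 5 hall
    simp [Finset.card_univ] at this
    omega
  have h6sum : ∑ i, ((C i).card - 5) = 2 := by
    have heq : ∑ i, (C i).card = ∑ i, (5 + ((C i).card - 5)) := by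
      refine Finset.sum_congr rfl fun i _ => ?_
      have := h5 i
      omega
    rw [heq, Finset.sum_add_distrib, Finset.sum_const, Finset.card_univ] at hsum
    simp at hsum
    omega
  have part : ∀ i, ∃ p : Fin 3, ∀ v, f v = i → v.1 = p := by
    intro i
    obtain ⟨p, hp⟩ := class_one_part {v | f v = i} (by rw [hC]; exact h5 i) (hAc i) (hDeg i)
    exact ⟨p, fun v hv => hp v hv⟩
  choose p hp using part
  set P : Finset (Σ _ : Fin 3, Fin (4 * k + 2)) :=
    Finset.univ.filter (fun v => v.1 = (0 : Fin 3)) with hPs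
  have hPcard : P.card = 4 * k + 2 := by
    have himg : P = Finset.univ.image
        (fun x : Fin (4 * k + 2) => (⟨0, x⟩ : Σ _ : Fin 3, Fin (4 * k + 2))) := by
      ext ⟨q, x⟩
      simp only [hPs, Finset.mem_filter, Finset.mem_univ, true_and, Finset.mem_image]
      constructor
      · rintro rfl
        exact ⟨x, rfl⟩
      · rintro ⟨y, h⟩
        exact (congrArg Sigma.fst h).symm
    rw [himg, Finset.card_image_of_injective _ (fun a b h => by cases h; rfl)]
    simp
  have hPsum : P.card = ∑ i, (P.filter (fun v => f v = i)).card :=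
    Finset.card_eq_sum_card_fiberwise (fun x _ => Finset.mem_univ (f x))
  have hfib : ∀ i, (P.filter (fun v => f v = i)).card
      = if p i = 0 then (C i).card else 0 := by
    intro i
    split_ifs with h
    · congr 1
      ext v
      simp only [hPs, hCs, Finset.mem_filter, Finset.mem_univ, true_and, Finset.filter_filter]
      constructor
      · rintro ⟨-, hv⟩; exact hv
      · intro hv; exact ⟨(hp i v hv).trans h, hv⟩
    · rw [Finset.card_eq_zero]
      ext v
      simp only [hPs, Finset.mem_filter, Finset.mem_univ, true_and, Finset.notMem_empty,
        iff_false, not_and, Finset.filter_filter]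
      intro hv0 hv
      exact h ((hp i v hv).symm.trans hv0)
  have hfsum : P.card = ∑ i ∈ Finset.univ.filter (fun i => p i = 0), (C i).card := by
    rw [hPsum, Finset.sum_filter]
    exact Finset.sum_congr rfl fun i _ => hfib i
  set T := Finset.univ.filter (fun i => p i = 0) with hTs
  have hTsum : ∑ i ∈ T, (C i).card = 5 * T.card + ∑ i ∈ T, ((C i).card - 5) := by
    have heq : ∑ i ∈ T, (C i).card = ∑ i ∈ T, (5 + ((C i).card - 5)) := by
      refine Finset.sum_congr rfl fun i _ => ?_
      have := h5 i
      omega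
    rw [heq, Finset.sum_add_distrib, Finset.sum_const, smul_eq_mul]
    ring
  have hle : ∑ i ∈ T, ((C i).card - 5) ≤ 2 :=
    le_trans (Finset.sum_le_sum_of_subset (Finset.subset_univ T)) (le_of_eq h6sum)
  omega

theorem stmt17 (k m : ℕ) (hk : k = 5 * m + 3) :
    ¬ EqTreeColorable (K3 (4 * k + 2)) (12 * m + 8) 3 ∧
    (12 * k + 9) / 5 ≤ vaStrong (K3 (4 * k + 2)) 3 := by
  have hnot := no_coloring k m hk
  refine ⟨hnot, ?_⟩
  have hT0 : (30 * m + 21) ∈ {t | ∀ t', t ≤ t' → EqTreeColorable (K3 (4 * k + 2)) t' 3} := by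
    intro t' ht'
    refine colorable_of_two_mul _ t' (by omega) ?_
    rw [card_K3V]
    omega
  rw [vaStrong]
  refine le_csInf ⟨_, hT0⟩ ?_
  intro x hx
  by_contra hlt
  push_neg at hlt
  have hx8 : x ≤ 12 * m + 8 := by omega
  exact hnot (hx (12 * m + 8) hx8)
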